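/- Let κ be a cardinal satisfying the partition relation κ → (ω₁, (ω₁;ω₁)). Then every topological space X whose underlying set has cardinality κ and which is strongly separated (strongly left separated or strongly right separated) contains an uncountable discrete subspace, i.e., a subset D that is uncountable and discrete in the subspace topology. -/

import Mathlib

universe u

/-- A topological space is *strongly left separated* if it has a well-ordering `r` such that
every point `x` has a closed neighborhood `W x` (a closed set containing `x` in its interior)
containing no `r`-predecessor of `x`. -/
def StronglyLeftSeparated (X : Type u) [TopologicalSpace X] : Prop :=
  ∃ r : X → X → Prop, IsWellOrder X r ∧
    ∃ W : X → Set X, ∀ x : X, IsClosed (W x) ∧ x ∈ interior (W x) ∧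
      ∀ y : X, r y x → y ∉ W x

/-- A topological space is *strongly right separated* if it has a well-ordering `r` such that
every point `x` has a closed neighborhood `W x` containing no `r`-successor of `x`. -/
def StronglyRightSeparated (X : Type u) [TopologicalSpace X] : Prop :=
  ∃ r : X → X → Prop, IsWellOrder X r ∧
    ∃ W : X → Set X, ∀ x : X, IsClosed (W x) ∧ x ∈ interior (W x) ∧
      ∀ y : X, r x y → y ∉ W x

/-- A space is *strongly separated* if it is strongly left or strongly right separated. -/
def StronglySeparated (X : Type u) [TopologicalSpace X] : Prop :=
  StronglyLeftSeparated X ∨ StronglyRightSeparated X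

/-- `A` is a set of ordinals of order type `ω₁`. -/
def HasOrderTypeOmega1 (A : Set Ordinal.{u}) : Prop :=
  Ordinal.type ((· < ·) : A → A → Prop) = (Cardinal.aleph 1).ord

/-- The partition relation `κ → (ω₁, (ω₁;ω₁))` : for every 2-coloring `k` of the pairs of
ordinals below (the initial ordinal of) `κ`, either there is a `0`-homogeneous set of
cardinality `ℵ₁`, or there are disjoint sets `A, B` of ordinals below `κ`, each of order type
`ω₁`, with `sup A = sup B`, such that `k {α, β} = 1` whenever `α ∈ A`, `β ∈ B` and `α < β`. -/
def HalfGraphArrow (κ : Cardinal.{u}) : Prop :=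
  ∀ k : Ordinal.{u} → Ordinal.{u} → Fin 2,
    (∃ H : Set Ordinal.{u}, H ⊆ Set.Iio κ.ord ∧ Cardinal.mk H = Cardinal.aleph 1 ∧
      ∀ α ∈ H, ∀ β ∈ H, α < β → k α β = 0) ∨
    (∃ A B : Set Ordinal.{u}, A ⊆ Set.Iio κ.ord ∧ B ⊆ Set.Iio κ.ord ∧ Disjoint A B ∧
      HasOrderTypeOmega1 A ∧ HasOrderTypeOmega1 B ∧ sSup A = sSup B ∧
      ∀ α ∈ A, ∀ β ∈ B, α < β → k α β = 1)


namespace HalfGraphAux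


open Cardinal Set

theorem hot_mk {A : Set Ordinal.{u}} (hA : HasOrderTypeOmega1 A) : #A = ℵ₁ := by
  have := congrArg Ordinal.card hA
  rwa [Ordinal.card_type, Cardinal.card_ord] at this

theorem hot_not_countable {A : Set Ordinal.{u}} (hA : HasOrderTypeOmega1 A) : ¬ A.Countable := by
  intro hc
  rw [Cardinal.countable_iff_lt_aleph_one, hot_mk hA] at hc
  exact lt_irrefl _ hc

theorem hot_nonempty {A : Set Ordinal.{u}} (hA : HasOrderTypeOmega1 A) : A.Nonempty := by
  rw [← Set.nonempty_coe_sort, ← Cardinal.mk_ne_zero_iff, hot_mk hA]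
  exact (Cardinal.aleph_pos 1).ne'

theorem hot_seg {A : Set Ordinal.{u}} (hA : HasOrderTypeOmega1 A) {a : Ordinal.{u}} (ha : a ∈ A) :
    (A ∩ Set.Iio a).Countable := by
  rw [Cardinal.countable_iff_lt_aleph_one]
  have h1 := Ordinal.typein_lt_type ((· < ·) : A → A → Prop) ⟨a, ha⟩
  rw [hA] at h1
  have h2 : #{y : A // y < (⟨a, ha⟩ : A)} < ℵ₁ := by
    exact Cardinal.lt_ord.1 h1
  refine lt_of_le_of_lt (Cardinal.mk_le_of_injective (f := fun x : ↥(A ∩ Set.Iio a) =>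
    (⟨⟨x.1, x.2.1⟩, Subtype.mk_lt_mk.2 x.2.2⟩ : {y : A // y < (⟨a, ha⟩ : A)})) ?_) h2
  intro x y hxy
  apply Subtype.ext
  exact congrArg (fun z : {y : A // y < (⟨a, ha⟩ : A)} => (z.1 : Ordinal)) hxy

theorem hot_exists_gt {A : Set Ordinal.{u}} (hA : HasOrderTypeOmega1 A) {a : Ordinal.{u}}
    (ha : a ∈ A) : ∃ a' ∈ A, a < a' := by
  by_contra h
  push_neg at h
  have hsub : A ⊆ (A ∩ Set.Iio a) ∪ {a} := by
    intro x hx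
    rcases lt_or_eq_of_le (h x hx) with h' | h'
    · exact Or.inl ⟨hx, h'⟩
    · exact Or.inr h'
  exact hot_not_countable hA (((hot_seg hA ha).union (Set.countable_singleton a)).mono hsub)

theorem hot_lt_sSup {A : Set Ordinal.{u}} (hA : HasOrderTypeOmega1 A) (hbdd : BddAbove A)
    {a : Ordinal.{u}} (ha : a ∈ A) : a < sSup A := by
  obtain ⟨a', ha', hlt⟩ := hot_exists_gt hA ha
  exact lt_of_lt_of_le hlt (le_csSup hbdd ha')

theorem hot_cofinal_not_countable {A S : Set Ordinal.{u}} (hA : HasOrderTypeOmega1 A)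
    (hS : S ⊆ A) (hcof : ∀ a ∈ A, ∃ s ∈ S, a < s) : ¬ S.Countable := by
  intro hc
  have hsub : A ⊆ ⋃ s ∈ S, A ∩ Set.Iio s := by
    intro a ha
    obtain ⟨s, hs, hlt⟩ := hcof a ha
    exact Set.mem_biUnion hs ⟨ha, hlt⟩
  exact hot_not_countable hA ((hc.biUnion (fun s hs => hot_seg hA (hS hs))).mono hsub)

theorem discrete_of_sep {X : Type u} [TopologicalSpace X] {D : Set X}
    (h : ∀ x ∈ D, ∃ U : Set X, IsOpen U ∧ x ∈ U ∧ ∀ y ∈ D, y ∈ U → y = x) :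
    DiscreteTopology D := by
  rw [discreteTopology_iff_isOpen_singleton]
  rintro ⟨x, hx⟩
  obtain ⟨U, hUo, hxU, hsep⟩ := h x hx
  convert hUo.preimage continuous_subtype_val
  ext ⟨y, hy⟩
  simp only [Set.mem_singleton_iff, Set.mem_preimage, Subtype.mk.injEq]
  exact ⟨fun h => h ▸ hxU, fun h => hsep y hy h⟩

theorem ite_fin2_eq_zero {P : Prop} [Decidable P] (h : (if P then (1 : Fin 2) else 0) = 0) :
    ¬ P := by
  intro hP; rw [if_pos hP] at h; exact absurd h (by decide)

theorem ite_fin2_eq_one {P : Prop} [Decidable P] (h : (if P then (1 : Fin 2) else 0) = 1) :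
    P := by
  by_contra hP; rw [if_neg hP] at h; exact absurd h (by decide)



open Cardinal Set


theorem mk_not_countable {α : Type*} {S : Set α} (h : Cardinal.mk S = Cardinal.aleph 1) :
    ¬ S.Countable := by
  intro hc
  rw [Cardinal.countable_iff_lt_aleph_one, h] at hc
  exact lt_irrefl _ hc

theorem not_countable_range {α : Type*} {X : Type*} {S : Set α} (f : ↥S → X)
    (hf : Function.Injective f) (hS : ¬ S.Countable) : ¬ (Set.range f).Countable := by
  intro hc
  have h1 : Countable ↥(Set.range f) := hc.to_subtype
  have h2 : Countable ↥S := Countable.of_equiv _ (Equiv.ofInjective f hf).symm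
  exact hS (Set.countable_coe_iff.1 h2)

theorem key_right (κ : Cardinal.{u}) (hκ : HalfGraphArrow κ)
    (X : Type u) [TopologicalSpace X] (hX : Cardinal.mk X = κ)
    (hsep : ∃ r : X → X → Prop, IsWellOrder X r ∧
      ∃ W : X → Set X, ∀ x : X, IsClosed (W x) ∧ x ∈ interior (W x) ∧
        ∀ y : X, r x y → y ∉ W x) :
    ∃ D : Set X, ¬ D.Countable ∧ DiscreteTopology D := by
  classical
  obtain ⟨r, hr, W, hW⟩ := hsep
  haveI := hr
  have hle : κ.ord ≤ Ordinal.type r := by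
    rw [Cardinal.ord_le, Ordinal.card_type, hX]
  let e : {o : Ordinal.{u} // o < κ.ord} → X :=
    fun o => Ordinal.enum r ⟨o.1, lt_of_lt_of_le o.2 hle⟩
  have emono : ∀ (α β : Ordinal.{u}) (hα : α < κ.ord) (hβ : β < κ.ord), α < β →
      r (e ⟨α, hα⟩) (e ⟨β, hβ⟩) :=
    fun α β hα hβ h => Ordinal.enum_lt_enum.2 (Subtype.mk_lt_mk.2 h)
  have einj : ∀ (α β : Ordinal.{u}) (hα : α < κ.ord) (hβ : β < κ.ord),
      e ⟨α, hα⟩ = e ⟨β, hβ⟩ → α = β :=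
    fun α β hα hβ h => congrArg (fun z : {o // o < Ordinal.type r} => z.1) (Ordinal.enum_inj.1 h)
  rcases hκ (fun α β => if ∃ (hα : α < κ.ord) (hβ : β < κ.ord), e ⟨α, hα⟩ ∈ W (e ⟨β, hβ⟩)
      then 1 else 0) with
    ⟨H, hHsub, hHmk, hH0⟩ | ⟨A, B, hAsub, hBsub, hdisj, hAot, hBot, hsup, hedge⟩
  · -- homogeneous case
    let f : ↥H → X := fun s => e ⟨s.1, hHsub s.2⟩
    have finj : Function.Injective f := fun a b hab => Subtype.ext (einj _ _ _ _ hab)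
    refine ⟨Set.range f, not_countable_range f finj (mk_not_countable hHmk), ?_⟩
    · apply discrete_of_sep
      rintro x ⟨s, rfl⟩
      refine ⟨interior (W (f s)), isOpen_interior, (hW (f s)).2.1, ?_⟩
      rintro y ⟨t, rfl⟩ hyU
      rcases lt_trichotomy t.1 s.1 with hlt | heq | hgt
      · exact absurd (interior_subset hyU)
          (ite_fin2_eq_zero (hH0 t.1 t.2 s.1 s.2 hlt) ∘ fun hm => ⟨_, _, hm⟩)
      · exact congrArg f (Subtype.ext heq)
      · exact absurd (interior_subset hyU) ((hW (f s)).2.2 (f t) (emono s.1 t.1 _ _ hgt))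
  · -- half-graph case
    have hbddA : BddAbove A := ⟨κ.ord, fun x hx => le_of_lt (hAsub hx)⟩
    have hbddB : BddAbove B := ⟨κ.ord, fun x hx => le_of_lt (hBsub hx)⟩
    have hedge' : ∀ α ∈ A, ∀ β ∈ B, α < β → ∀ (hα : α < κ.ord) (hβ : β < κ.ord),
        e ⟨α, hα⟩ ∈ W (e ⟨β, hβ⟩) := by
      intro α hαA β hβB hlt hα hβ
      obtain ⟨hα', hβ', hm⟩ := ite_fin2_eq_one (hedge α hαA β hβB hlt)
      exact hm
    -- D₀ : elements of A that are the A-successor of some element of B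
    set D₀ : Set Ordinal.{u} :=
      {d | d ∈ A ∧ ∃ b ∈ B, b < d ∧ ∀ x ∈ A, b < x → d ≤ x} with hD₀
    have hD₀A : D₀ ⊆ A := fun _ h => h.1
    have hcof : ∀ a ∈ A, ∃ s ∈ D₀, a < s := by
      intro a₀ ha₀
      have h1 : a₀ < sSup B := hsup ▸ hot_lt_sSup hAot hbddA ha₀
      obtain ⟨b, hbB, hab⟩ := exists_lt_of_lt_csSup (hot_nonempty hBot) h1
      have h2 : b < sSup A := hsup ▸ hot_lt_sSup hBot hbddB hbB
      obtain ⟨x₀, hx₀A, hbx₀⟩ := exists_lt_of_lt_csSup (hot_nonempty hAot) h2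
      have hne : {x | x ∈ A ∧ b < x}.Nonempty := ⟨x₀, hx₀A, hbx₀⟩
      refine ⟨Ordinal.lt_wf.min _ hne, ⟨(Ordinal.lt_wf.min_mem _ hne).1, b, hbB,
        (Ordinal.lt_wf.min_mem _ hne).2, ?_⟩, lt_trans hab (Ordinal.lt_wf.min_mem _ hne).2⟩
      intro x hxA hbx
      exact not_lt.1 (Ordinal.lt_wf.not_lt_min {x | x ∈ A ∧ b < x} ⟨hxA, hbx⟩)
    have huncount : ¬ D₀.Countable := hot_cofinal_not_countable hAot hD₀A hcof
    let f : ↥D₀ → X := fun s => e ⟨s.1, hAsub (hD₀A s.2)⟩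
    have finj : Function.Injective f := fun a b hab => Subtype.ext (einj _ _ _ _ hab)
    refine ⟨Set.range f, not_countable_range f finj huncount, ?_⟩
    · apply discrete_of_sep
      rintro x ⟨s, rfl⟩
      obtain ⟨hsA, b, hbB, hbs, hdom⟩ := s.2
      refine ⟨interior (W (f s)) \ W (e ⟨b, hBsub hbB⟩),
        isOpen_interior.sdiff (hW _).1,
        ⟨(hW (f s)).2.1, (hW (e ⟨b, hBsub hbB⟩)).2.2 (f s) (emono b s.1 _ _ hbs)⟩, ?_⟩
      rintro y ⟨t, rfl⟩ hyU
      rcases lt_trichotomy t.1 s.1 with hlt | heq | hgt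
      · have htb : t.1 < b := by
          by_contra hcon
          push_neg at hcon
          have hne : b ≠ t.1 := fun h => (Set.disjoint_left.1 hdisj (hD₀A t.2)) (h ▸ hbB)
          exact absurd (hdom t.1 (hD₀A t.2) (lt_of_le_of_ne hcon hne)) (not_le.2 hlt)
        exact absurd (hedge' t.1 (hD₀A t.2) b hbB htb _ _) (fun hm => hyU.2 hm)
      · exact congrArg f (Subtype.ext heq)
      · exact absurd (interior_subset hyU.1) ((hW (f s)).2.2 (f t) (emono s.1 t.1 _ _ hgt))

theorem key_left (κ : Cardinal.{u}) (hκ : HalfGraphArrow κ)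
    (X : Type u) [TopologicalSpace X] (hX : Cardinal.mk X = κ)
    (hsep : ∃ r : X → X → Prop, IsWellOrder X r ∧
      ∃ W : X → Set X, ∀ x : X, IsClosed (W x) ∧ x ∈ interior (W x) ∧
        ∀ y : X, r y x → y ∉ W x) :
    ∃ D : Set X, ¬ D.Countable ∧ DiscreteTopology D := by
  classical
  obtain ⟨r, hr, W, hW⟩ := hsep
  haveI := hr
  have hle : κ.ord ≤ Ordinal.type r := by
    rw [Cardinal.ord_le, Ordinal.card_type, hX]
  let e : {o : Ordinal.{u} // o < κ.ord} → X :=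
    fun o => Ordinal.enum r ⟨o.1, lt_of_lt_of_le o.2 hle⟩
  have emono : ∀ (α β : Ordinal.{u}) (hα : α < κ.ord) (hβ : β < κ.ord), α < β →
      r (e ⟨α, hα⟩) (e ⟨β, hβ⟩) :=
    fun α β hα hβ h => Ordinal.enum_lt_enum.2 (Subtype.mk_lt_mk.2 h)
  have einj : ∀ (α β : Ordinal.{u}) (hα : α < κ.ord) (hβ : β < κ.ord),
      e ⟨α, hα⟩ = e ⟨β, hβ⟩ → α = β :=
    fun α β hα hβ h => congrArg (fun z : {o // o < Ordinal.type r} => z.1) (Ordinal.enum_inj.1 h)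
  rcases hκ (fun α β => if ∃ (hα : α < κ.ord) (hβ : β < κ.ord), e ⟨β, hβ⟩ ∈ W (e ⟨α, hα⟩)
      then 1 else 0) with
    ⟨H, hHsub, hHmk, hH0⟩ | ⟨A, B, hAsub, hBsub, hdisj, hAot, hBot, hsup, hedge⟩
  · -- homogeneous case
    let f : ↥H → X := fun s => e ⟨s.1, hHsub s.2⟩
    have finj : Function.Injective f := fun a b hab => Subtype.ext (einj _ _ _ _ hab)
    refine ⟨Set.range f, not_countable_range f finj (mk_not_countable hHmk), ?_⟩
    apply discrete_of_sep
    rintro x ⟨s, rfl⟩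
    refine ⟨interior (W (f s)), isOpen_interior, (hW (f s)).2.1, ?_⟩
    rintro y ⟨t, rfl⟩ hyU
    rcases lt_trichotomy t.1 s.1 with hlt | heq | hgt
    · exact absurd (interior_subset hyU) ((hW (f s)).2.2 (f t) (emono t.1 s.1 _ _ hlt))
    · exact congrArg f (Subtype.ext heq)
    · exact absurd (interior_subset hyU)
        (ite_fin2_eq_zero (hH0 s.1 s.2 t.1 t.2 hgt) ∘ fun hm => ⟨_, _, hm⟩)
  · -- half-graph case
    have hbddA : BddAbove A := ⟨κ.ord, fun x hx => le_of_lt (hAsub hx)⟩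
    have hbddB : BddAbove B := ⟨κ.ord, fun x hx => le_of_lt (hBsub hx)⟩
    have hedge' : ∀ α ∈ A, ∀ β ∈ B, α < β → ∀ (hα : α < κ.ord) (hβ : β < κ.ord),
        e ⟨β, hβ⟩ ∈ W (e ⟨α, hα⟩) := by
      intro α hαA β hβB hlt hα hβ
      obtain ⟨hα', hβ', hm⟩ := ite_fin2_eq_one (hedge α hαA β hβB hlt)
      exact hm
    -- D₀ : elements of B that are the B-successor of some element of A
    set D₀ : Set Ordinal.{u} :=
      {d | d ∈ B ∧ ∃ a ∈ A, a < d ∧ ∀ x ∈ B, a < x → d ≤ x} with hD₀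
    have hD₀B : D₀ ⊆ B := fun _ h => h.1
    have hcof : ∀ b ∈ B, ∃ s ∈ D₀, b < s := by
      intro b₀ hb₀
      have h1 : b₀ < sSup A := hsup.symm ▸ hot_lt_sSup hBot hbddB hb₀
      obtain ⟨a, haA, hba⟩ := exists_lt_of_lt_csSup (hot_nonempty hAot) h1
      have h2 : a < sSup B := hsup ▸ hot_lt_sSup hAot hbddA haA
      obtain ⟨x₀, hx₀B, hax₀⟩ := exists_lt_of_lt_csSup (hot_nonempty hBot) h2
      have hne : {x | x ∈ B ∧ a < x}.Nonempty := ⟨x₀, hx₀B, hax₀⟩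
      refine ⟨Ordinal.lt_wf.min _ hne, ⟨(Ordinal.lt_wf.min_mem _ hne).1, a, haA,
        (Ordinal.lt_wf.min_mem _ hne).2, ?_⟩, lt_trans hba (Ordinal.lt_wf.min_mem _ hne).2⟩
      intro x hxB hax
      exact not_lt.1 (Ordinal.lt_wf.not_lt_min {x | x ∈ B ∧ a < x} ⟨hxB, hax⟩)
    have huncount : ¬ D₀.Countable := hot_cofinal_not_countable hBot hD₀B hcof
    let f : ↥D₀ → X := fun s => e ⟨s.1, hBsub (hD₀B s.2)⟩
    have finj : Function.Injective f := fun a b hab => Subtype.ext (einj _ _ _ _ hab)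
    refine ⟨Set.range f, not_countable_range f finj huncount, ?_⟩
    apply discrete_of_sep
    rintro x ⟨s, rfl⟩
    obtain ⟨hsB, a, haA, has, hdom⟩ := s.2
    -- a' : the least element of A above s.1
    have h1 : (s.1 : Ordinal) < sSup A := hsup.symm ▸ hot_lt_sSup hBot hbddB hsB
    obtain ⟨x₀, hx₀A, hsx₀⟩ := exists_lt_of_lt_csSup (hot_nonempty hAot) h1
    have hne : {x | x ∈ A ∧ s.1 < x}.Nonempty := ⟨x₀, hx₀A, hsx₀⟩
    set a' : Ordinal.{u} := Ordinal.lt_wf.min {x | x ∈ A ∧ s.1 < x} hne with ha'def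
    have ha'A : a' ∈ A := (Ordinal.lt_wf.min_mem _ hne).1
    have hsa' : (s.1 : Ordinal) < a' := (Ordinal.lt_wf.min_mem _ hne).2
    have hmin : ∀ c ∈ A, s.1 < c → a' ≤ c :=
      fun c hcA hsc => not_lt.1 (Ordinal.lt_wf.not_lt_min {x | x ∈ A ∧ s.1 < x} ⟨hcA, hsc⟩)
    refine ⟨interior (W (f s)) \ W (e ⟨a', hAsub ha'A⟩),
      isOpen_interior.sdiff (hW _).1,
      ⟨(hW (f s)).2.1, (hW (e ⟨a', hAsub ha'A⟩)).2.2 (f s) (emono s.1 a' _ _ hsa')⟩, ?_⟩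
    rintro y ⟨t, rfl⟩ hyU
    obtain ⟨htB, a₂, ha₂A, ha₂t, hdom₂⟩ := t.2
    rcases lt_trichotomy t.1 s.1 with hlt | heq | hgt
    · exact absurd (interior_subset hyU.1) ((hW (f s)).2.2 (f t) (emono t.1 s.1 _ _ hlt))
    · exact congrArg f (Subtype.ext heq)
    · have ha't : a' < t.1 := by
        by_contra hcon
        push_neg at hcon
        have hta' : (t.1 : Ordinal) < a' :=
          lt_of_le_of_ne hcon (fun h => (Set.disjoint_left.1 hdisj ha'A) (h ▸ htB))
        rcases lt_or_ge s.1 a₂ with hsa₂ | ha₂s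
        · exact absurd (lt_trans ha₂t hta') (not_lt.2 (hmin a₂ ha₂A hsa₂))
        · have ha₂s' : a₂ < s.1 :=
            lt_of_le_of_ne ha₂s (fun h => (Set.disjoint_left.1 hdisj ha₂A) (h ▸ hsB))
          exact absurd (hdom₂ s.1 hsB ha₂s') (not_le.2 hgt)
      exact absurd (hedge' a' ha'A t.1 htB ha't _ _) (fun hm => hyU.2 hm)


end HalfGraphAux

/-- If `κ → (ω₁, (ω₁;ω₁))` holds, then every strongly separated topological space of
cardinality `κ` contains an uncountable discrete subspace. -/
theorem stmt0 (κ : Cardinal.{u}) (hκ : HalfGraphArrow κ)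
    (X : Type u) [TopologicalSpace X] (hX : Cardinal.mk X = κ)
    (hsep : StronglySeparated X) :
    ∃ D : Set X, ¬ D.Countable ∧ DiscreteTopology D := by
  rcases hsep with hL | hR
  · exact HalfGraphAux.key_left κ hκ X hX hL
  · exact HalfGraphAux.key_right κ hκ X hX hR
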